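/- Let α > 0, β > 0 and γ ∈ ℝ. Then for every z ∈ ℂ the series ∑_{m=0}^∞ (γ)_m z^m / (Γ(αm+β) m!) defining the generalized (Prabhakar) Mittag-Leffler function E_{α,β}^γ(z) converges absolutely (the family of terms is summable); in particular E_{α,β}^γ is defined on all of ℂ. -/

import Mathlib

open Filter

/-- Gamma along an arithmetic progression eventually dominates any geometric sequence. -/
lemma gamma_eventually_ge_geom (α β S : ℝ) (hα : 0 < α) (hβ : 0 < β) (hS : 0 ≤ S) :
    ∀ᶠ m : ℕ in atTop, S ^ m ≤ Real.Gamma (α * m + β) := by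
  set T : ℝ := max 1 ((S + 1) ^ (α⁻¹ : ℝ)) with hT
  have hT1 : (1 : ℝ) ≤ T := le_max_left _ _
  have hT0 : (0 : ℝ) < T := lt_of_lt_of_le one_pos hT1
  -- eventually T^(j+2) ≤ j!
  have h1 : ∀ᶠ j : ℕ in atTop, T ^ (j + 2) ≤ (Nat.factorial j : ℝ) := by
    have := FloorSemiring.tendsto_pow_div_factorial_atTop T
    have h2 := this.eventually (gt_mem_nhds (show (0:ℝ) < (T^2)⁻¹ by positivity))
    filter_upwards [h2] with j hj
    have hfac : (0:ℝ) < Nat.factorial j := by positivity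
    rw [div_lt_iff₀ hfac] at hj
    have : T ^ j * T ^ 2 ≤ (T ^ 2)⁻¹ * (Nat.factorial j : ℝ) * T ^ 2 := by
      gcongr
    calc T ^ (j + 2) = T ^ j * T ^ 2 := by ring
      _ ≤ (T ^ 2)⁻¹ * (Nat.factorial j : ℝ) * T ^ 2 := this
      _ = (Nat.factorial j : ℝ) := by field_simp
  obtain ⟨N₁, hN₁⟩ := h1.exists_forall_of_atTop
  -- eventually α*m+β is large
  have h3 : Tendsto (fun m : ℕ => α * m + β) atTop atTop := by
    apply Tendsto.atTop_add _ tendsto_const_nhds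
    exact (tendsto_natCast_atTop_atTop).const_mul_atTop hα
  filter_upwards [h3.eventually_ge_atTop ((N₁ : ℝ) + 3)] with m hm
  set x := α * m + β with hx
  have hx2 : (2 : ℝ) ≤ x := by linarith [(by exact_mod_cast Nat.zero_le N₁ : (0:ℝ) ≤ N₁)]
  set n : ℕ := ⌊x⌋₊ with hn
  have hxn : (n : ℝ) ≤ x := Nat.floor_le (by linarith)
  have hxn' : x < n + 1 := Nat.lt_floor_add_one x
  have hn3 : (N₁ : ℝ) + 3 ≤ (n : ℝ) + 1 := by linarith
  have hnN : N₁ + 2 ≤ n := by have : N₁ + 3 ≤ n + 1 := by exact_mod_cast hn3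
                              omega
  have hn1 : 1 ≤ n := by omega
  -- Gamma x ≥ Gamma n = (n-1)!
  have hG1 : Real.Gamma n ≤ Real.Gamma x := by
    rcases eq_or_lt_of_le hxn with h | h
    · rw [h]
    · exact (Real.Gamma_strictMonoOn_Ici (by exact_mod_cast by omega : (2:ℝ) ≤ (n:ℝ))
        (le_trans (by exact_mod_cast by omega) hxn) h).le
  have hGfac : Real.Gamma n = ((Nat.factorial (n-1)) : ℝ) := by
    have : ((n : ℝ)) = ((n - 1 : ℕ) : ℝ) + 1 := by
      have : n - 1 + 1 = n := Nat.succ_pred_eq_of_pos hn1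
      exact_mod_cast (by omega : n = (n-1) + 1)
    rw [this, Real.Gamma_nat_eq_factorial]
  -- S^m ≤ T^(n+1)
  have key : S ^ m ≤ T ^ (n + 1) := by
    have hS1 : S ^ m ≤ (S + 1) ^ m := by gcongr; linarith
    have e1 : ((S + 1) : ℝ) ^ m = ((S + 1) ^ (α⁻¹ : ℝ)) ^ (α * m : ℝ) := by
      rw [← Real.rpow_natCast (S+1) m, ← Real.rpow_mul (by linarith)]
      congr 1
      field_simp
    have e2 : ((S + 1) ^ (α⁻¹ : ℝ)) ^ (α * m : ℝ) ≤ T ^ (α * m : ℝ) := by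
      apply Real.rpow_le_rpow (Real.rpow_nonneg (by linarith) _) (le_max_right _ _)
      positivity
    have e3 : T ^ (α * m : ℝ) ≤ T ^ ((n : ℝ) + 1) := by
      apply Real.rpow_le_rpow_of_exponent_le hT1
      have : α * m ≤ x := by rw [hx]; linarith
      linarith
    have e4 : T ^ ((n : ℝ) + 1) = T ^ (n + 1) := by
      rw [← Real.rpow_natCast T (n+1)]
      norm_num
    calc S ^ m ≤ (S + 1) ^ m := hS1
      _ = _ := e1
      _ ≤ _ := e2
      _ ≤ _ := e3
      _ = _ := e4
  -- T^(n+1) ≤ (n-1)!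
  have hfin : T ^ (n + 1) ≤ ((Nat.factorial (n-1)) : ℝ) := by
    have := hN₁ (n - 1) (by omega)
    have heq : n - 1 + 2 = n + 1 := by omega
    rwa [heq] at this
  calc S ^ m ≤ T ^ (n + 1) := key
    _ ≤ ((Nat.factorial (n-1)) : ℝ) := hfin
    _ = Real.Gamma n := hGfac.symm
    _ ≤ Real.Gamma x := hG1

/-- For `α > 0`, `β > 0`, `γ ∈ ℝ` and every `z ∈ ℂ`, the series
`∑ₘ (γ)ₘ zᵐ / (Γ(αm+β) m!)` defining the generalized (Prabhakar)
Mittag-Leffler function converges absolutely (the family of terms is summable).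
Here `(γ)ₘ = ∏_{i<m} (γ + i)` is the rising factorial. -/
theorem prabhakar_mittagLeffler_summable (α β γ : ℝ) (hα : 0 < α) (hβ : 0 < β)
    (z : ℂ) :
    Summable (fun m : ℕ =>
      (((∏ i ∈ Finset.range m, (γ + i)) : ℝ) : ℂ) * z ^ m /
        ((Real.Gamma (α * m + β) : ℂ) * (Nat.factorial m : ℂ))) := by
  set C : ℝ := |γ| + 1 with hC
  set R : ℝ := C * ‖z‖ with hR
  have hC0 : 0 < C := by positivity
  have hR0 : 0 ≤ R := by positivity
  apply Summable.of_norm_bounded_eventually_nat (g := fun m => (1/2 : ℝ) ^ m)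
    (summable_geometric_of_lt_one (by norm_num) (by norm_num))
  filter_upwards [gamma_eventually_ge_geom α β (2 * R) hα hβ (by positivity)] with m hm
  have hG0 : 0 < Real.Gamma (α * m + β) := Real.Gamma_pos_of_pos (by positivity)
  have hfac0 : (0 : ℝ) < (Nat.factorial m : ℝ) := by positivity
  -- compute the norm
  have hnorm : ‖(((∏ i ∈ Finset.range m, (γ + i)) : ℝ) : ℂ) * z ^ m /
        ((Real.Gamma (α * m + β) : ℂ) * (Nat.factorial m : ℂ))‖
      = |∏ i ∈ Finset.range m, (γ + i)| * ‖z‖ ^ m /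
        (Real.Gamma (α * m + β) * (Nat.factorial m : ℝ)) := by
    rw [norm_div, norm_mul, norm_mul, norm_pow, Complex.norm_real]
    norm_num [Complex.norm_natCast, abs_of_pos hG0, Complex.norm_real,
      Real.norm_eq_abs]
    rw [Finset.abs_prod]
  rw [hnorm]
  -- bound the rising factorial
  have hprod : |∏ i ∈ Finset.range m, (γ + i)| ≤ C ^ m * (Nat.factorial m : ℝ) := by
    rw [Finset.abs_prod]
    calc ∏ i ∈ Finset.range m, |γ + (i : ℝ)|
        ≤ ∏ i ∈ Finset.range m, C * ((i : ℝ) + 1) := by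
          apply Finset.prod_le_prod (fun i _ => abs_nonneg _)
          intro i _
          have : |γ + (i : ℝ)| ≤ |γ| + i := by
            calc |γ + (i : ℝ)| ≤ |γ| + |(i : ℝ)| := abs_add_le _ _
              _ = |γ| + i := by simp [Nat.abs_cast]
          have h2 : |γ| + (i : ℝ) ≤ C * ((i : ℝ) + 1) := by
            rw [hC]; nlinarith [mul_nonneg (abs_nonneg γ) (Nat.cast_nonneg (α := ℝ) i)]
          linarith
      _ = C ^ m * ∏ i ∈ Finset.range m, ((i : ℝ) + 1) := by
          rw [Finset.prod_mul_distrib, Finset.prod_const, Finset.card_range]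
      _ = C ^ m * (Nat.factorial m : ℝ) := by
          congr 1
          exact_mod_cast Finset.prod_range_add_one_eq_factorial m
  -- combine
  have step1 : |∏ i ∈ Finset.range m, (γ + i)| * ‖z‖ ^ m /
        (Real.Gamma (α * m + β) * (Nat.factorial m : ℝ))
      ≤ R ^ m / Real.Gamma (α * m + β) := by
    rw [hR, mul_pow, div_le_div_iff₀ (by positivity) hG0]
    calc |∏ i ∈ Finset.range m, (γ + i)| * ‖z‖ ^ m * Real.Gamma (α * m + β)
        ≤ C ^ m * (Nat.factorial m : ℝ) * ‖z‖ ^ m * Real.Gamma (α * m + β) := by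
          gcongr
      _ = C ^ m * ‖z‖ ^ m * (Real.Gamma (α * m + β) * (Nat.factorial m : ℝ)) := by ring
  have step2 : R ^ m / Real.Gamma (α * m + β) ≤ (1/2 : ℝ) ^ m := by
    rw [div_le_iff₀ hG0]
    have : (2 * R) ^ m ≤ Real.Gamma (α * m + β) := hm
    have h2 : (1/2 : ℝ) ^ m * (2 * R) ^ m = R ^ m := by
      rw [← mul_pow]; ring_nf
    calc R ^ m = (1/2 : ℝ) ^ m * (2 * R) ^ m := h2.symm
      _ ≤ (1/2 : ℝ) ^ m * Real.Gamma (α * m + β) := by gcongr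
  exact le_trans step1 step2
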